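/- Let G be a block graph of order n that is not a complete graph. If ι(G) = n/3, then every block of G contains at most two simplicial vertices. -/

import Mathlib

open SimpleGraph Set

/-- The closed neighborhood `N[D]` of a set of vertices. -/
def closedNbhd {V : Type*} (G : SimpleGraph V) (D : Set V) : Set V :=
  {w | w ∈ D ∨ ∃ v ∈ D, G.Adj v w}

/-- `D` is an isolating set: the vertices outside `N[D]` form an independent set. -/
def IsIsolating {V : Type*} (G : SimpleGraph V) (D : Set V) : Prop :=
  ∀ a b : V, a ∉ closedNbhd G D → b ∉ closedNbhd G D → ¬ G.Adj a b

/-- The isolation number: minimum cardinality of an isolating set. -/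
noncomputable def isolNum {V : Type*} (G : SimpleGraph V) : ℕ :=
  sInf {k | ∃ D : Set V, IsIsolating G D ∧ D.ncard = k}

/-- `v` is a cut vertex of `G`. -/
def IsCutVertex {V : Type*} (G : SimpleGraph V) (v : V) : Prop :=
  G.Connected ∧ ¬ (G.induce {w | w ≠ v}).Connected

/-- `B` is a block of `G`: a maximal connected set of vertices inducing a subgraph
without cut vertices. -/
def IsBlock {V : Type*} (G : SimpleGraph V) (B : Set V) : Prop :=
  (G.induce B).Connected ∧ (∀ v, ¬ IsCutVertex (G.induce B) v) ∧
    ∀ B' : Set V, B ⊆ B' → (G.induce B').Connected →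
      (∀ v, ¬ IsCutVertex (G.induce B') v) → B' = B

/-- A block graph: a connected graph all of whose blocks are complete. -/
def IsBlockGraph {V : Type*} (G : SimpleGraph V) : Prop :=
  G.Connected ∧ ∀ B : Set V, IsBlock G B → ∀ x ∈ B, ∀ y ∈ B, x ≠ y → G.Adj x y

/-- `v` is simplicial: its closed neighborhood induces a complete graph. -/
def Simplicial {V : Type*} (G : SimpleGraph V) (v : V) : Prop :=
  ∀ x ∈ G.neighborSet v, ∀ y ∈ G.neighborSet v, x ≠ y → G.Adj x y

/-- An end-block: a block containing at most one cut vertex of `G`. -/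
def IsEndBlock {V : Type*} (G : SimpleGraph V) (B : Set V) : Prop :=
  IsBlock G B ∧ {v ∈ B | IsCutVertex G v}.Subsingleton


namespace Stmt5Aux

variable {V : Type*} (G : SimpleGraph V)

/-- a walk from `a` to `b` staying inside `S`. -/
def WIn (S : Set V) (a b : V) : Prop := ∃ w : G.Walk a b, ∀ x ∈ w.support, x ∈ S

/-- `S` is nonempty and connected via internal walks. -/
def WConn (S : Set V) : Prop := S.Nonempty ∧ ∀ a ∈ S, ∀ b ∈ S, WIn G S a b

variable {G}

lemma WIn.left {S : Set V} {a b : V} (h : WIn G S a b) : a ∈ S := by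
  obtain ⟨w, hw⟩ := h; exact hw a w.start_mem_support

lemma WIn.right {S : Set V} {a b : V} (h : WIn G S a b) : b ∈ S := by
  obtain ⟨w, hw⟩ := h; exact hw b w.end_mem_support

lemma win_refl {S : Set V} {a : V} (ha : a ∈ S) : WIn G S a a :=
  ⟨Walk.nil, by simp [ha]⟩

lemma WIn.symm {S : Set V} {a b : V} (h : WIn G S a b) : WIn G S b a := by
  obtain ⟨w, hw⟩ := h
  exact ⟨w.reverse, by simpa using hw⟩

lemma WIn.trans {S : Set V} {a b c : V} (h : WIn G S a b) (h' : WIn G S b c) :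
    WIn G S a c := by
  obtain ⟨w, hw⟩ := h; obtain ⟨w', hw'⟩ := h'
  refine ⟨w.append w', ?_⟩
  intro x hx
  rw [Walk.mem_support_append_iff] at hx
  rcases hx with hx | hx
  · exact hw x hx
  · exact hw' x hx

lemma win_of_adj {S : Set V} {a b : V} (ha : a ∈ S) (hb : b ∈ S) (h : G.Adj a b) :
    WIn G S a b :=
  ⟨Walk.cons h Walk.nil, by simp [ha, hb]⟩

lemma WIn.mono {S T : Set V} (hST : S ⊆ T) {a b : V} (h : WIn G S a b) : WIn G T a b := by
  obtain ⟨w, hw⟩ := h; exact ⟨w, fun x hx => hST (hw x hx)⟩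

lemma wconn_singleton (a : V) : WConn G {a} :=
  ⟨⟨a, rfl⟩, by rintro x rfl y rfl; exact win_refl rfl⟩

lemma wconn_of_common {S : Set V} {c : V} (hc : c ∈ S) (h : ∀ x ∈ S, WIn G S x c) :
    WConn G S :=
  ⟨⟨c, hc⟩, fun a ha b hb => (h a ha).trans (h b hb).symm⟩

/-- a nonempty pairwise-adjacent set is connected. -/
lemma wconn_of_clique {S : Set V} (hne : S.Nonempty) (h : S.Pairwise G.Adj) : WConn G S := by
  obtain ⟨c, hc⟩ := hne
  refine wconn_of_common hc fun x hx => ?_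
  rcases eq_or_ne x c with rfl | hxc
  · exact win_refl hx
  · exact win_of_adj hx hc (h hx hc hxc)

/-! ### components -/

variable (G) in
/-- the connected component of `a` inside `R`. -/
def CompOf (R : Set V) (a : V) : Set V := {b ∈ R | WIn G R a b}

lemma compOf_subset {R : Set V} {a : V} : CompOf G R a ⊆ R := fun _ h => h.1

lemma mem_compOf_self {R : Set V} {a : V} (ha : a ∈ R) : a ∈ CompOf G R a :=
  ⟨ha, win_refl ha⟩

lemma mem_compOf_of_win {R : Set V} {a b : V} (h : WIn G R a b) : b ∈ CompOf G R a :=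
  ⟨h.right, h⟩

lemma compOf_eq_of_mem {R : Set V} {a b : V} (hb : b ∈ CompOf G R a) :
    CompOf G R b = CompOf G R a := by
  ext x
  exact ⟨fun hx => ⟨hx.1, hb.2.trans hx.2⟩, fun hx => ⟨hx.1, hb.2.symm.trans hx.2⟩⟩

lemma adj_mem_compOf {R : Set V} {a b c : V} (hb : b ∈ CompOf G R a) (hc : c ∈ R)
    (hadj : G.Adj b c) : c ∈ CompOf G R a :=
  ⟨hc, hb.2.trans (win_of_adj hb.1 hc hadj)⟩

/-- every vertex on a walk within `R` starting at a vertex of the component stays in it. -/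
lemma walk_support_in_compOf {R : Set V} {a : V} :
    ∀ {b c : V} (w : G.Walk b c), (∀ x ∈ w.support, x ∈ R) → b ∈ CompOf G R a →
      ∀ x ∈ w.support, x ∈ CompOf G R a := by
  intro b c w
  induction w with
  | nil =>
    intro hR hb x hx
    simp only [Walk.support_nil, List.mem_singleton] at hx
    subst hx; exact hb
  | @cons u v t h p ih =>
    intro hR hb x hx
    have hv : v ∈ CompOf G R a := adj_mem_compOf hb (hR v (by simp)) h
    simp only [Walk.support_cons, List.mem_cons] at hx
    rcases hx with rfl | hx
    · exact hb
    · exact ih (fun y hy => hR y (by simp [hy])) hv x hx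

lemma win_compOf {R : Set V} {a b c : V} (hb : b ∈ CompOf G R a) (h : WIn G R b c) :
    WIn G (CompOf G R a) b c := by
  obtain ⟨w, hw⟩ := h
  exact ⟨w, walk_support_in_compOf w hw hb⟩

lemma wconn_compOf {R : Set V} {a : V} (ha : a ∈ R) : WConn G (CompOf G R a) := by
  refine wconn_of_common (mem_compOf_self ha) fun x hx => ?_
  exact (win_compOf (mem_compOf_self ha) hx.2).symm

/-- vertices in different components are non-adjacent. -/
lemma not_adj_of_compOf_ne {R : Set V} {a b x y : V} (hx : x ∈ CompOf G R a)
    (hy : y ∈ CompOf G R b) (hne : CompOf G R a ≠ CompOf G R b) : ¬ G.Adj x y := by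
  intro hadj
  apply hne
  have hyx : y ∈ CompOf G R a := adj_mem_compOf hx hy.1 hadj
  rw [← compOf_eq_of_mem hy, ← compOf_eq_of_mem hyx]

/-- helper : first entry of a walk into `K`. -/
lemma first_entry {S K : Set V} {c : V} :
    ∀ {b k : V} (w : G.Walk b k), k ∈ K → (∀ x ∈ w.support, x ∈ S) →
      b ∈ CompOf G (S \ K) c → ∃ z ∈ CompOf G (S \ K) c, ∃ q ∈ K ∩ S, G.Adj q z := by
  intro b k w
  induction w with
  | nil =>
    intro hk _ hb
    exact absurd hk hb.1.2
  | @cons u v t h p ih =>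
    intro hk hsupp hb
    by_cases hv : v ∈ K
    · exact ⟨u, hb, v, ⟨hv, hsupp v (by simp)⟩, h.symm⟩
    · have hvS : v ∈ S := hsupp v (by simp)
      exact ih hk (fun y hy => hsupp y (by simp [hy])) (adj_mem_compOf hb ⟨hvS, hv⟩ h)

/-- a component of `S \ K` has a neighbour in `K ∩ S`, provided `S` is connected
and `K ∩ S` is nonempty. -/
lemma exists_attach {S K : Set V} (hS : WConn G S) {c : V} (hc : c ∈ S \ K)
    (hK : (K ∩ S).Nonempty) :
    ∃ z ∈ CompOf G (S \ K) c, ∃ q ∈ K ∩ S, G.Adj q z := by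
  obtain ⟨k, hkK, hkS⟩ := hK
  obtain ⟨w, hw⟩ := hS.2 c hc.1 k hkS
  exact first_entry w hkK hw (mem_compOf_self hc)

/-! ### bridges to `induce` connectivity -/

lemma reachable_induce_of_win {S : Set V} :
    ∀ {a b : V} (w : G.Walk a b) (h : ∀ x ∈ w.support, x ∈ S),
      (G.induce S).Reachable ⟨a, h a w.start_mem_support⟩ ⟨b, h b w.end_mem_support⟩ := by
  intro a b w
  induction w with
  | nil => intro h; rfl
  | @cons u v t hadj p ih =>
    intro h
    have h1 : u ∈ S := h u (by simp)
    have h2 : v ∈ S := h v (by simp)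
    have hstep : (G.induce S).Adj ⟨u, h1⟩ ⟨v, h2⟩ := by
      simp [hadj]
    exact (hstep.reachable).trans (ih (fun y hy => h y (by simp [hy])))

lemma win_of_reachable_induce {S : Set V} {a b : ↥S}
    (h : (G.induce S).Reachable a b) : WIn G S a.val b.val := by
  obtain ⟨w⟩ := h
  induction w with
  | nil => exact win_refl (Subtype.mem _)
  | @cons u v t hadj p ih =>
    have : G.Adj u.val v.val := hadj
    exact (win_of_adj (Subtype.mem _) (Subtype.mem _) this).trans ih

lemma wconn_iff_induce_connected {S : Set V} : WConn G S ↔ (G.induce S).Connected := by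
  constructor
  · rintro ⟨⟨c, hc⟩, h⟩
    have hne : Nonempty ↥S := ⟨⟨c, hc⟩⟩
    refine Connected.mk ?_
    intro a b
    obtain ⟨w, hw⟩ := h a.val a.2 b.val b.2
    have := reachable_induce_of_win w hw
    simpa using this
  · intro hConn
    have hne : S.Nonempty := by
      obtain ⟨a⟩ := hConn.nonempty
      exact ⟨a.val, a.2⟩
    exact ⟨hne, fun a ha b hb =>
      win_of_reachable_induce (hConn.preconnected ⟨a, ha⟩ ⟨b, hb⟩)⟩

lemma win_lift {B : Set V} {T : Set ↥B} :
    ∀ {x y : V} (w : G.Walk x y), (∀ z ∈ w.support, z ∈ Subtype.val '' T) →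
      ∀ (a b : ↥B), a.val = x → b.val = y → WIn (G.induce B) T a b := by
  intro x y w
  induction w with
  | nil =>
    intro hsupp a b hax hby
    have hab : a = b := Subtype.val_injective (hax.trans hby.symm)
    subst hab
    have : a.val ∈ Subtype.val '' T := by rw [hax]; exact hsupp _ (by simp [← hax])
    obtain ⟨a', ha', hva⟩ := this
    have : a' = a := Subtype.val_injective hva
    exact win_refl (this ▸ ha')
  | @cons u v t hadj p ih =>
    intro hsupp a b hax hby
    have hvT : v ∈ Subtype.val '' T := hsupp v (by simp)
    obtain ⟨v', hv', hvv⟩ := hvT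
    have haT : a ∈ T := by
      obtain ⟨a', ha', hva⟩ := hsupp u (by simp [← hax])
      rwa [show a' = a from Subtype.val_injective (by rw [hva, hax])] at ha'
    have hstep : (G.induce B).Adj a v' := by
      have : G.Adj a.val v'.val := by rw [hax, hvv]; exact hadj
      simpa using this
    exact (win_of_adj haT hv' hstep).trans
      (ih (fun z hz => hsupp z (by simp [hz])) v' b hvv hby)

/-- correspondence between subsets of an induced subgraph and subsets of `V`. -/
lemma wconn_induce_iff {B : Set V} {T : Set ↥B} :
    WConn (G.induce B) T ↔ WConn G (Subtype.val '' T) := by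
  constructor
  · rintro ⟨⟨c, hc⟩, h⟩
    refine ⟨⟨c.val, ⟨c, hc, rfl⟩⟩, ?_⟩
    rintro a ⟨a', ha', rfl⟩ b ⟨b', hb', rfl⟩
    obtain ⟨w, hw⟩ := h a' ha' b' hb'
    clear ha' hb'
    induction w with
    | nil => exact win_refl ⟨_, hw _ (by simp), rfl⟩
    | @cons u v t hadj p ih =>
      have h1 : u.val ∈ Subtype.val '' T := ⟨u, hw u (by simp), rfl⟩
      have h2 : v.val ∈ Subtype.val '' T := ⟨v, hw v (by simp), rfl⟩
      have : G.Adj u.val v.val := hadj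
      exact (win_of_adj h1 h2 this).trans (ih (fun y hy => hw y (by simp [hy])))
  · rintro ⟨⟨c, ⟨c', hc', rfl⟩⟩, h⟩
    refine ⟨⟨c', hc'⟩, ?_⟩
    intro a ha b hb
    obtain ⟨w, hw⟩ := h a.val ⟨a, ha, rfl⟩ b.val ⟨b, hb, rfl⟩
    exact win_lift w hw a b rfl rfl

/-! ### blocks are cliques -/

variable (G) in
/-- a connected set with no internal cut vertices. -/
def GoodSet (S : Set V) : Prop := WConn G S ∧ ∀ v ∈ S, WConn G (S \ {v})

lemma image_val_ne (B : Set V) (v : ↥B) :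
    Subtype.val '' {w : ↥B | w ≠ v} = B \ {v.val} := by
  ext x
  constructor
  · rintro ⟨w, hw, rfl⟩
    exact ⟨w.2, fun h => hw (Subtype.val_injective h)⟩
  · rintro ⟨hx, hxv⟩
    exact ⟨⟨x, hx⟩, fun h => hxv (congrArg Subtype.val h), rfl⟩

lemma goodSet_isBlock [Fintype V] {S : Set V} (hS : GoodSet G S)
    (hmax : ∀ U, GoodSet G U → S ⊆ U → U = S) : IsBlock G S := by
  refine ⟨wconn_iff_induce_connected.mp hS.1, ?_, ?_⟩
  · rintro v ⟨hconn, hnot⟩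
    apply hnot
    rw [← wconn_iff_induce_connected, wconn_induce_iff, image_val_ne]
    exact hS.2 v.val v.2
  · intro B' hSB' hconn hnocut
    apply hmax
    · constructor
      · exact wconn_iff_induce_connected.mpr hconn
      · intro v hv
        have h := hnocut ⟨v, hv⟩
        rw [IsCutVertex] at h
        push_neg at h
        have h2 := (wconn_iff_induce_connected (S := {w : ↥B' | w ≠ ⟨v, hv⟩})).mpr (h hconn)
        rw [wconn_induce_iff, image_val_ne] at h2
        exact h2
    · exact hSB'

lemma goodSet_exists_maximal [Fintype V] {S : Set V} (hS : GoodSet G S) :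
    ∃ U, GoodSet G U ∧ S ⊆ U ∧ ∀ U', GoodSet G U' → U ⊆ U' → U' = U := by
  classical
  set P : Set (Set V) := {U | GoodSet G U ∧ S ⊆ U} with hP
  have hPfin : P.Finite := Set.toFinite _
  have hPne : P.Nonempty := ⟨S, hS, subset_rfl⟩
  obtain ⟨U, hU, hUmax⟩ := Set.Finite.exists_maximalFor Set.ncard P hPfin hPne
  refine ⟨U, hU.1, hU.2, ?_⟩
  intro U' hU' hUU'
  by_contra hne
  have hssub : U ⊂ U' := ⟨hUU', fun h => hne (subset_antisymm h hUU')⟩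
  have hlt : U.ncard < U'.ncard := Set.ncard_lt_ncard hssub (Set.toFinite _)
  have := hUmax (j := U') ⟨hU', hU.2.trans hUU'⟩ hlt.le
  omega

/-- in a block graph, every connected set without internal cut vertices is a clique. -/
lemma goodSet_pairwise [Fintype V] (hbg : IsBlockGraph G) {T : Set V}
    (hT : GoodSet G T) : T.Pairwise G.Adj := by
  obtain ⟨U, hU, hTU, hUmax⟩ := goodSet_exists_maximal hT
  have hblock : IsBlock G U := goodSet_isBlock hU hUmax
  have hpair := hbg.2 U hblock
  exact fun a ha b hb hab => hpair a (hTU ha) b (hTU hb) hab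

/-! ### paths and cut vertices -/

section Paths
variable [DecidableEq V]

lemma end_not_mem_takeUntil {u x : V} {p : G.Walk u x} (hp : p.IsPath) {y : V}
    (hy : y ∈ p.support) (hyx : y ≠ x) : x ∉ (p.takeUntil y hy).support := by
  intro hmem
  have hspec := p.take_spec hy
  have hnd : ((p.takeUntil y hy).append (p.dropUntil y hy)).support.Nodup := by
    rw [hspec]; exact hp.support_nodup
  rw [Walk.support_append] at hnd
  have hdisj := List.disjoint_of_nodup_append hnd
  have hx2 : x ∈ (p.dropUntil y hy).support.tail := by
    have hxs : x ∈ (p.dropUntil y hy).support := Walk.end_mem_support _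
    rw [Walk.support_eq_cons (p.dropUntil y hy)] at hxs
    rcases List.mem_cons.mp hxs with h | h
    · exact absurd h.symm hyx
    · exact h
  exact hdisj hmem hx2

lemma start_not_mem_dropUntil {x u : V} {p : G.Walk x u} (hp : p.IsPath) {y : V}
    (hy : y ∈ p.support) (hyx : y ≠ x) : x ∉ (p.dropUntil y hy).support := by
  intro hmem
  have hspec := p.take_spec hy
  have hnd : ((p.takeUntil y hy).append (p.dropUntil y hy)).support.Nodup := by
    rw [hspec]; exact hp.support_nodup
  rw [Walk.support_append] at hnd
  have hdisj := List.disjoint_of_nodup_append hnd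
  have hx1 : x ∈ (p.takeUntil y hy).support := Walk.start_mem_support _
  have hx2 : x ∈ (p.dropUntil y hy).support.tail := by
    rw [Walk.support_eq_cons (p.dropUntil y hy)] at hmem
    rcases List.mem_cons.mp hmem with h | h
    · exact absurd h.symm hyx
    · exact h
  exact hdisj hx1 hx2

end Paths

/-- if `v` is not a cut vertex then any two of its neighbours in `S` are adjacent. -/
lemma noncut_nbr_adj [Fintype V] (hbg : IsBlockGraph G) {S : Set V} {v : V}
    (hnc : WConn G (S \ {v})) {u w : V} (hu : u ∈ S) (hw : w ∈ S)
    (hau : G.Adj v u) (haw : G.Adj v w) (huw : u ≠ w) : G.Adj u w := by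
  classical
  have hu' : u ∈ S \ {v} := ⟨hu, fun h => G.irrefl (h ▸ hau)⟩
  have hw' : w ∈ S \ {v} := ⟨hw, fun h => G.irrefl (h ▸ haw)⟩
  obtain ⟨w₀, hw₀⟩ := hnc.2 u hu' w hw'
  set p := w₀.bypass with hpdef
  have hp : p.IsPath := w₀.bypass_isPath
  have hsupp : ∀ x ∈ p.support, x ∈ S \ {v} := fun x hx =>
    hw₀ x (w₀.support_bypass_subset hx)
  have hvnotp : v ∉ p.support := fun h => (hsupp v h).2 rfl
  set C : Set V := insert v {x | x ∈ p.support} with hCdef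
  have hvC : v ∈ C := Set.mem_insert _ _
  have hCS : ∀ x ∈ {x | x ∈ p.support}, x ∈ C := fun x hx => Set.mem_insert_of_mem _ hx
  classical
  -- every member of the support reaches u within the support
  have hwalkxu : ∀ y (hy : y ∈ p.support), WIn G {x | x ∈ p.support} y u := by
    intro y hy
    refine ⟨(p.takeUntil y hy).reverse, ?_⟩
    intro z hz
    rw [Walk.support_reverse, List.mem_reverse] at hz
    exact p.support_takeUntil_subset hy hz
  have hCgood : GoodSet G C := by
    constructor
    · refine wconn_of_common hvC ?_
      intro x hx
      rcases Set.mem_insert_iff.mp hx with rfl | hx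
      · exact win_refl hvC
      · have h1 : WIn G C x u := ((hwalkxu x hx).mono (fun z hz => hCS z hz))
        exact h1.trans (win_of_adj (hCS u p.start_mem_support) hvC hau.symm)
    · intro c hc
      rcases Set.mem_insert_iff.mp hc with rfl | hcs
      · -- removing v : the support remains
        have hCv : C \ {c} = {x | x ∈ p.support} := by
          ext z
          simp only [hCdef, Set.mem_diff, Set.mem_insert_iff, Set.mem_singleton_iff,
            Set.mem_setOf_eq]
          constructor
          · rintro ⟨rfl | hz, hzc⟩
            · exact absurd rfl hzc
            · exact hz
          · intro hz
            exact ⟨Or.inr hz, fun h => hvnotp (h ▸ hz)⟩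
        rw [hCv]
        exact wconn_of_common p.start_mem_support hwalkxu
      · -- removing a support vertex
        have hvc : v ≠ c := fun h => hvnotp (h ▸ hcs)
        have hvC' : v ∈ C \ {c} := ⟨hvC, hvc⟩
        refine wconn_of_common hvC' ?_
        intro y hy
        obtain ⟨hyC, hyc⟩ := hy
        rcases Set.mem_insert_iff.mp hyC with rfl | hys
        · exact win_refl hvC'
        · by_cases hcy : c ∈ (p.takeUntil y hys).support
          · -- y lies after c : go forward to w
            have hyc' : y ≠ c := hyc
            have hcw : c ∉ (p.dropUntil y hys).support := by
              intro hmem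
              have hspec := p.take_spec hys
              have hnd : ((p.takeUntil y hys).append (p.dropUntil y hys)).support.Nodup := by
                rw [hspec]; exact hp.support_nodup
              rw [Walk.support_append] at hnd
              have hdisj := List.disjoint_of_nodup_append hnd
              have : c ∈ (p.dropUntil y hys).support.tail := by
                rw [Walk.support_eq_cons (p.dropUntil y hys)] at hmem
                rcases List.mem_cons.mp hmem with h | h
                · exact absurd h.symm hyc'
                · exact h
              exact hdisj hcy this
            have h1 : WIn G (C \ {c}) y w := by
              refine ⟨p.dropUntil y hys, ?_⟩
              intro z hz
              exact ⟨hCS z (p.support_dropUntil_subset hys hz), fun hzc => hcw (hzc ▸ hz)⟩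
            have hwc : w ≠ c := fun h => hcw (h ▸ Walk.end_mem_support _)
            exact (h1.trans (win_of_adj ⟨hCS w p.end_mem_support, hwc⟩ hvC' haw.symm))
          · -- y lies before c : go back to u
            have h1 : WIn G (C \ {c}) y u := by
              refine ⟨(p.takeUntil y hys).reverse, ?_⟩
              intro z hz
              rw [Walk.support_reverse, List.mem_reverse] at hz
              exact ⟨hCS z (p.support_takeUntil_subset hys hz), fun hzc => hcy (hzc ▸ hz)⟩
            have huc : u ≠ c := fun h => hcy (h ▸ Walk.start_mem_support _)
            exact h1.trans (win_of_adj ⟨hCS u p.start_mem_support, huc⟩ hvC' hau.symm)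
  have hpair := goodSet_pairwise hbg hCgood
  exact hpair (hCS u p.start_mem_support) (hCS w p.end_mem_support) huw

/-! ### isolation on subsets -/

variable (G) in
/-- `D` isolates `S`. -/
def IsoOn (S D : Set V) : Prop :=
  D ⊆ S ∧ ∀ a ∈ S, a ∉ closedNbhd G D → ∀ b ∈ S, b ∉ closedNbhd G D → ¬ G.Adj a b

variable (G) in
noncomputable def nuOn (S : Set V) : ℕ := sInf {k | ∃ D, IsoOn G S D ∧ D.ncard = k}

lemma subset_closedNbhd {D : Set V} : D ⊆ closedNbhd G D := fun x hx => Or.inl hx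

lemma mem_closedNbhd_of_adj {D : Set V} {d w : V} (hd : d ∈ D) (h : G.Adj d w) :
    w ∈ closedNbhd G D := Or.inr ⟨d, hd, h⟩

lemma closedNbhd_mono {D E : Set V} (h : D ⊆ E) : closedNbhd G D ⊆ closedNbhd G E := by
  rintro x (hx | ⟨d, hd, hadj⟩)
  · exact Or.inl (h hx)
  · exact Or.inr ⟨d, h hd, hadj⟩

lemma isoOn_self (S : Set V) : IsoOn G S S :=
  ⟨subset_rfl, fun a ha hna => absurd (subset_closedNbhd ha) hna⟩

lemma nuOn_exists (S : Set V) : ∃ D, IsoOn G S D ∧ D.ncard = nuOn G S := by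
  have hne : {k | ∃ D, IsoOn G S D ∧ D.ncard = k}.Nonempty := ⟨S.ncard, S, isoOn_self S, rfl⟩
  exact Nat.sInf_mem hne

lemma nuOn_le {S D : Set V} (h : IsoOn G S D) : nuOn G S ≤ D.ncard :=
  Nat.sInf_le ⟨D, h, rfl⟩

/-- assembling an isolating set from a removed region and per-component data. -/
lemma assemble {S K E : Set V} (hES : E ⊆ S) (hK : ∀ x ∈ K ∩ S, x ∈ closedNbhd G E)
    (hcomp : ∀ c ∈ S \ K, (∃ D, D ⊆ E ∧ IsoOn G (CompOf G (S \ K) c) D) ∨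
      ((CompOf G (S \ K) c) \ closedNbhd G E).Subsingleton) :
    IsoOn G S E := by
  refine ⟨hES, ?_⟩
  intro a haS haE b hbS hbE hadj
  have haK : a ∈ S \ K := ⟨haS, fun h => haE (hK a ⟨h, haS⟩)⟩
  have hbK : b ∈ S \ K := ⟨hbS, fun h => hbE (hK b ⟨h, hbS⟩)⟩
  have hbcomp : b ∈ CompOf G (S \ K) a := adj_mem_compOf (mem_compOf_self haK) hbK hadj
  rcases hcomp a haK with ⟨D, hDE, hiso⟩ | hss
  · have haD : a ∉ closedNbhd G D := fun h => haE (closedNbhd_mono hDE h)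
    have hbD : b ∉ closedNbhd G D := fun h => hbE (closedNbhd_mono hDE h)
    exact hiso.2 a (mem_compOf_self haK) haD b hbcomp hbD hadj
  · have hab : a = b := hss ⟨mem_compOf_self haK, haE⟩ ⟨hbcomp, hbE⟩
    exact G.irrefl (hab ▸ hadj)

/-! ### counting components -/

section Counting
variable [Fintype V] [DecidableEq V]

variable (G) in
noncomputable def comps (R : Set V) : Finset (Set V) :=
  @Finset.image _ _ (Classical.decEq _) (fun a => CompOf G R a) (Set.toFinite R).toFinset

lemma mem_comps {R C : Set V} : C ∈ comps G R ↔ ∃ a ∈ R, C = CompOf G R a := by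
  classical
  simp only [comps, Finset.mem_image, Set.Finite.mem_toFinset]
  exact ⟨fun ⟨a, ha, h⟩ => ⟨a, ha, h.symm⟩, fun ⟨a, ha, h⟩ => ⟨a, ha, h.symm⟩⟩

lemma comps_nonempty_mem {R C : Set V} (hC : C ∈ comps G R) : C.Nonempty := by
  obtain ⟨a, ha, rfl⟩ := mem_comps.mp hC
  exact ⟨a, mem_compOf_self ha⟩

lemma comps_subset {R C : Set V} (hC : C ∈ comps G R) : C ⊆ R := by
  obtain ⟨a, ha, rfl⟩ := mem_comps.mp hC
  exact compOf_subset

lemma comps_wconn {R C : Set V} (hC : C ∈ comps G R) : WConn G C := by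
  obtain ⟨a, ha, rfl⟩ := mem_comps.mp hC
  exact wconn_compOf ha

lemma comps_disjoint {R C C' : Set V} (hC : C ∈ comps G R) (hC' : C' ∈ comps G R)
    (hne : C ≠ C') : Disjoint C C' := by
  obtain ⟨a, ha, rfl⟩ := mem_comps.mp hC
  obtain ⟨b, hb, rfl⟩ := mem_comps.mp hC'
  rw [Set.disjoint_left]
  intro x hx hx'
  exact hne (by rw [← compOf_eq_of_mem hx, ← compOf_eq_of_mem hx'])

lemma comps_cover {R : Set V} {x : V} (hx : x ∈ R) : ∃ C ∈ comps G R, x ∈ C :=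
  ⟨CompOf G R x, mem_comps.mpr ⟨x, hx, rfl⟩, mem_compOf_self hx⟩

lemma comps_eq_of_mem {R C : Set V} (hC : C ∈ comps G R) {x : V} (hx : x ∈ C) :
    C = CompOf G R x := by
  obtain ⟨a, ha, rfl⟩ := mem_comps.mp hC
  exact (compOf_eq_of_mem hx).symm

lemma sum_comps_ncard {R : Set V} : ∑ C ∈ comps G R, C.ncard = R.ncard := by
  classical
  have h1 : (Set.toFinite R).toFinset =
      (comps G R).biUnion (fun C => (Set.toFinite C).toFinset) := by
    ext x
    simp only [Set.Finite.mem_toFinset, Finset.mem_biUnion]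
    constructor
    · intro hx
      obtain ⟨C, hC, hxC⟩ := comps_cover (G := G) hx
      exact ⟨C, hC, by simpa using hxC⟩
    · rintro ⟨C, hC, hx⟩
      exact comps_subset hC (by simpa using hx)
  have h2 : R.ncard = (Set.toFinite R).toFinset.card :=
    Set.ncard_eq_toFinset_card R (Set.toFinite R)
  rw [h2, h1, Finset.card_biUnion]
  · exact Finset.sum_congr rfl fun C hC =>
      Set.ncard_eq_toFinset_card C (Set.toFinite C)
  · intro C hC C' hC' hne
    have hd := comps_disjoint hC hC' hne
    rw [Set.disjoint_left] at hd
    rw [Function.onFun, Finset.disjoint_left]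
    intro x hx hx'
    exact hd (by simpa using hx) (by simpa using hx')

lemma ncard_biUnion_le (t : Finset (Set V)) (f : Set V → Set V) :
    (⋃ C ∈ t, f C).ncard ≤ ∑ C ∈ t, (f C).ncard := by
  classical
  induction t using Finset.induction with
  | empty => simp
  | @insert a s ha ih =>
    rw [Finset.sum_insert ha]
    have h1 : (⋃ C ∈ insert a s, f C) = f a ∪ ⋃ C ∈ s, f C := by
      simp [Set.biUnion_insert]
    rw [h1]
    exact le_trans (Set.ncard_union_le _ _) (by omega)

end Counting

/-! ### building isolating sets from components -/

lemma two_comp_subsingleton {C E : Set V} (h2 : C.ncard = 2) {z : V} (hz : z ∈ C)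
    (hzE : z ∈ closedNbhd G E) : (C \ closedNbhd G E).Subsingleton := by
  obtain ⟨x, y, hxy, rfl⟩ := Set.ncard_eq_two.mp h2
  intro a ha b hb
  have haz : a ≠ z := fun h => ha.2 (h ▸ hzE)
  have hbz : b ≠ z := fun h => hb.2 (h ▸ hzE)
  rcases hz with rfl | rfl
  · rcases ha.1 with rfl | rfl
    · exact absurd rfl haz
    · rcases hb.1 with rfl | rfl
      · exact absurd rfl hbz
      · rfl
  · rcases ha.1 with rfl | rfl
    · rcases hb.1 with rfl | rfl
      · rfl
      · exact absurd rfl hbz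
    · exact absurd rfl haz

section Counting2
variable [Fintype V] [DecidableEq V]

lemma build {S K E : Set V} (hE : E ⊆ S) (hK : ∀ x ∈ K ∩ S, x ∈ closedNbhd G E)
    (hbig : ∀ C ∈ comps G (S \ K), 3 ≤ C.ncard → ∃ D, D ⊆ E ∧ IsoOn G C D)
    (h2 : ∀ C ∈ comps G (S \ K), C.ncard = 2 → (C \ closedNbhd G E).Subsingleton) :
    IsoOn G S E := by
  apply assemble hE hK
  intro c hc
  have hCm : CompOf G (S \ K) c ∈ comps G (S \ K) := mem_comps.mpr ⟨c, hc, rfl⟩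
  set C := CompOf G (S \ K) c with hCdef
  have hCne : C.Nonempty := ⟨c, mem_compOf_self hc⟩
  have hpos : 0 < C.ncard := (Set.ncard_pos (Set.toFinite C)).mpr hCne
  rcases le_or_gt 3 C.ncard with h3 | hlt
  · exact Or.inl (hbig C hCm h3)
  · right
    have h12 : C.ncard = 1 ∨ C.ncard = 2 := by omega
    rcases h12 with h | h
    · obtain ⟨x, hx⟩ := Set.ncard_eq_one.mp h
      rw [hx]
      exact Set.Subsingleton.anti (by simp) Set.diff_subset
    · exact h2 C hCm h
  
lemma sum_split (ℱ : Finset (Set V)) (h1 : ∀ C ∈ ℱ, 1 ≤ C.ncard) :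
    ∑ C ∈ ℱ, C.ncard = (ℱ.filter (fun C => C.ncard = 1)).card
      + 2 * (ℱ.filter (fun C => C.ncard = 2)).card
      + ∑ C ∈ ℱ.filter (fun C => 3 ≤ C.ncard), C.ncard := by
  classical
  induction ℱ using Finset.induction with
  | empty => simp
  | @insert a s ha ih =>
    have h1' : ∀ C ∈ s, 1 ≤ C.ncard := fun C hC => h1 C (Finset.mem_insert_of_mem hC)
    have hone := h1 a (Finset.mem_insert_self a s)
    rw [Finset.sum_insert ha, ih h1']
    rw [Finset.filter_insert, Finset.filter_insert, Finset.filter_insert]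
    rcases le_or_gt 3 a.ncard with h3 | hlt
    · have hn1 : ¬ (a.ncard = 1) := by omega
      have hn2 : ¬ (a.ncard = 2) := by omega
      rw [if_neg hn1, if_neg hn2, if_pos h3, Finset.sum_insert (by
        simp only [Finset.mem_filter]; tauto)]
      ring
    · have h12 : a.ncard = 1 ∨ a.ncard = 2 := by omega
      rcases h12 with h | h
      · have hn2 : ¬ (a.ncard = 2) := by omega
        have hn3 : ¬ (3 ≤ a.ncard) := by omega
        rw [if_pos h, if_neg hn2, if_neg hn3,
          Finset.card_insert_of_notMem (by simp only [Finset.mem_filter]; tauto)]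
        omega
      · have hn1 : ¬ (a.ncard = 1) := by omega
        have hn3 : ¬ (3 ≤ a.ncard) := by omega
        rw [if_neg hn1, if_pos h, if_neg hn3,
          Finset.card_insert_of_notMem (by simp only [Finset.mem_filter]; tauto)]
        omega

lemma count_split (ℱ : Finset (Set V)) (h1 : ∀ C ∈ ℱ, 1 ≤ C.ncard) :
    ℱ.card = (ℱ.filter (fun C => C.ncard = 1)).card
      + (ℱ.filter (fun C => C.ncard = 2)).card
      + (ℱ.filter (fun C => 3 ≤ C.ncard)).card := by
  classical
  induction ℱ using Finset.induction with
  | empty => simp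
  | @insert a s ha ih =>
    have h1' : ∀ C ∈ s, 1 ≤ C.ncard := fun C hC => h1 C (Finset.mem_insert_of_mem hC)
    have hone := h1 a (Finset.mem_insert_self a s)
    rw [Finset.card_insert_of_notMem ha, ih h1']
    rw [Finset.filter_insert, Finset.filter_insert, Finset.filter_insert]
    have hmem : ∀ (p : Set V → Prop) [DecidablePred p],
        a ∉ Finset.filter p s := fun p _ h => ha (Finset.mem_filter.mp h).1
    rcases le_or_gt 3 a.ncard with h3 | hlt
    · rw [if_neg (by omega : ¬ (a.ncard = 1)), if_neg (by omega : ¬ (a.ncard = 2)),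
        if_pos h3, Finset.card_insert_of_notMem (hmem _)]
      omega
    · have h12 : a.ncard = 1 ∨ a.ncard = 2 := by omega
      rcases h12 with h | h
      · rw [if_pos h, if_neg (by omega : ¬ (a.ncard = 2)),
          if_neg (by omega : ¬ (3 ≤ a.ncard)), Finset.card_insert_of_notMem (hmem _)]
        omega
      · rw [if_neg (by omega : ¬ (a.ncard = 1)), if_pos h,
          if_neg (by omega : ¬ (3 ≤ a.ncard)), Finset.card_insert_of_notMem (hmem _)]
        omega

end Counting2

/-! ### the main induction -/

section Main
variable [Fintype V] [DecidableEq V]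

theorem main_ind (hbg : IsBlockGraph G) :
    ∀ (n : ℕ) (S : Set V), S.ncard ≤ n → WConn G S → 3 ≤ S.ncard →
      (∃ D, IsoOn G S D ∧ 3 * D.ncard ≤ S.ncard) ∧
      (∀ v ∈ S, (∀ D, IsoOn G S D → S.ncard ≤ 3 * D.ncard) →
        ∃ E, IsoOn G S E ∧ v ∈ E ∧ 3 * E.ncard ≤ S.ncard) := by
  classical
  intro n
  induction n with
  | zero => intro S h0 _ h3; omega
  | succ n IH =>
    intro S hSn hSconn hS3
    -- general per-region data
    have setup : ∀ K : Set V, (K ∩ S).Nonempty →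
        ∃ (U : Set V) (t1 t2 A B : ℕ),
          U ⊆ S \ K ∧ U.ncard ≤ A ∧ 3 * A ≤ B ∧
          S.ncard = (K ∩ S).ncard + (t1 + 2 * t2 + B) ∧
          (∀ C ∈ comps G (S \ K), 3 ≤ C.ncard → ∃ D, D ⊆ U ∧ IsoOn G C D) ∧
          t2 = ((comps G (S \ K)).filter (fun C => C.ncard = 2)).card ∧
          (comps G (S \ K)).card = t1 + t2 +
            ((comps G (S \ K)).filter (fun C => 3 ≤ C.ncard)).card ∧
          (∀ C₀ ∈ comps G (S \ K), 3 ≤ C₀.ncard → ∀ E₀, IsoOn G C₀ E₀ →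
            ∃ U', U' ⊆ S \ K ∧ E₀ ⊆ U' ∧
              3 * U'.ncard + C₀.ncard ≤ 3 * E₀.ncard + B ∧
              (∀ C ∈ comps G (S \ K), 3 ≤ C.ncard → ∃ D, D ⊆ U' ∧ IsoOn G C D)) ∧
          ((∃ C ∈ comps G (S \ K), 3 ≤ C.ncard ∧ C.ncard ≤ 3 * nuOn G C) ∨
            3 * A + ((comps G (S \ K)).filter (fun C => 3 ≤ C.ncard)).card ≤ B) := by
      intro K hKne
      set R := S \ K with hRdef
      set ℱ := comps G R with hFdef
      set ℱb := ℱ.filter (fun C => 3 ≤ C.ncard) with hFbdef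
      set DC : Set V → Set V := fun C => Classical.choose (nuOn_exists (G := G) C) with hDCdef
      have hDC : ∀ C : Set V, IsoOn G C (DC C) ∧ (DC C).ncard = nuOn G C := fun C =>
        Classical.choose_spec (nuOn_exists (G := G) C)
      set U : Set V := ⋃ C ∈ ℱb, DC C with hUdef
      set A : ℕ := ∑ C ∈ ℱb, nuOn G C with hAdef
      set B : ℕ := ∑ C ∈ ℱb, C.ncard with hBdef
      set t1 : ℕ := (ℱ.filter (fun C => C.ncard = 1)).card with ht1def
      set t2 : ℕ := (ℱ.filter (fun C => C.ncard = 2)).card with ht2def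
      -- components are strictly smaller than S
      have hlt : ∀ C ∈ ℱ, C.ncard < S.ncard := by
        intro C hC
        obtain ⟨k, hk⟩ := hKne
        refine Set.ncard_lt_ncard ⟨(comps_subset hC).trans Set.diff_subset, ?_⟩
          (Set.toFinite S)
        intro hsub
        exact ((comps_subset hC) (hsub hk.2)).2 hk.1
      -- induction on big components
      have hIH3 : ∀ C ∈ ℱb, 3 * nuOn G C ≤ C.ncard := by
        intro C hC
        obtain ⟨hCF, h3⟩ := Finset.mem_filter.mp hC
        obtain ⟨⟨D', hD', hD3⟩, _⟩ := IH C (by have := hlt C hCF; omega) (comps_wconn hCF) h3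
        exact le_trans (by have := nuOn_le hD'; omega) hD3
      have hUsub : U ⊆ R := by
        intro x hx
        simp only [hUdef, Set.mem_iUnion] at hx
        obtain ⟨C, hC, hxC⟩ := hx
        exact (comps_subset (Finset.mem_filter.mp hC).1) ((hDC C).1.1 hxC)
      have hUA : U.ncard ≤ A := by
        refine le_trans (ncard_biUnion_le ℱb DC) (le_of_eq ?_)
        exact Finset.sum_congr rfl fun C _ => (hDC C).2
      have hAB : 3 * A ≤ B := by
        rw [hAdef, hBdef, Finset.mul_sum]
        exact Finset.sum_le_sum hIH3
      have hone : ∀ C ∈ ℱ, 1 ≤ C.ncard := fun C hC =>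
        (Set.ncard_pos (Set.toFinite C)).mpr (comps_nonempty_mem hC)
      have hcard : S.ncard = (K ∩ S).ncard + (t1 + 2 * t2 + B) := by
        have h1 : (S ∩ K).ncard + (S \ K).ncard = S.ncard :=
          Set.ncard_inter_add_ncard_diff_eq_ncard S K (Set.toFinite S)
        have h2 : (S ∩ K) = (K ∩ S) := Set.inter_comm _ _
        have h3 : R.ncard = t1 + 2 * t2 + B := by
          rw [← sum_comps_ncard (G := G) (R := R)]
          exact sum_split ℱ hone
        rw [← h1, h2, h3]
      have hbigU : ∀ C ∈ ℱ, 3 ≤ C.ncard → ∃ D, D ⊆ U ∧ IsoOn G C D := by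
        intro C hC h3
        refine ⟨DC C, ?_, (hDC C).1⟩
        exact Set.subset_biUnion_of_mem (u := DC) (Finset.mem_filter.mpr ⟨hC, h3⟩)
      have hcount : ℱ.card = t1 + t2 + ℱb.card := count_split ℱ hone
      refine ⟨U, t1, t2, A, B, hUsub, hUA, hAB, hcard, hbigU, rfl, hcount, ?_, ?_⟩
      · intro C₀ hC₀ h3 E₀ hE₀
        refine ⟨E₀ ∪ (⋃ C ∈ ℱb.erase C₀, DC C), ?_, Set.subset_union_left, ?_, ?_⟩
        · apply Set.union_subset
          · exact hE₀.1.trans (comps_subset hC₀)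
          · intro x hx
            simp only [Set.mem_iUnion] at hx
            obtain ⟨C, hC, hxC⟩ := hx
            exact (comps_subset (Finset.mem_filter.mp (Finset.mem_of_mem_erase hC)).1)
              ((hDC C).1.1 hxC)
        · have hb : (⋃ C ∈ ℱb.erase C₀, DC C).ncard ≤ ∑ C ∈ ℱb.erase C₀, nuOn G C := by
            refine le_trans (ncard_biUnion_le _ DC) (le_of_eq ?_)
            exact Finset.sum_congr rfl fun C _ => (hDC C).2
          have hsumerase : C₀.ncard + ∑ C ∈ ℱb.erase C₀, C.ncard = B :=
            Finset.add_sum_erase ℱb _ (Finset.mem_filter.mpr ⟨hC₀, h3⟩)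
          have herase3 : 3 * (∑ C ∈ ℱb.erase C₀, nuOn G C) ≤ ∑ C ∈ ℱb.erase C₀, C.ncard := by
            rw [Finset.mul_sum]
            exact Finset.sum_le_sum fun C hC => hIH3 C (Finset.mem_of_mem_erase hC)
          have hcardU' := Set.ncard_union_le E₀ (⋃ C ∈ ℱb.erase C₀, DC C)
          omega
        · intro C hC h3'
          by_cases hCC : C = C₀
          · exact ⟨E₀, hCC ▸ Set.subset_union_left, hCC ▸ hE₀⟩
          · refine ⟨DC C, ?_, (hDC C).1⟩
            refine subset_trans ?_ Set.subset_union_right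
            exact Set.subset_biUnion_of_mem (u := DC)
              (Finset.mem_erase.mpr ⟨hCC, Finset.mem_filter.mpr ⟨hC, h3'⟩⟩)
      · by_cases hex : ∃ C ∈ ℱ, 3 ≤ C.ncard ∧ C.ncard ≤ 3 * nuOn G C
        · exact Or.inl hex
        · push_neg at hex
          right
          have : ∀ C ∈ ℱb, 3 * nuOn G C + 1 ≤ C.ncard := by
            intro C hC
            obtain ⟨hCF, h3⟩ := Finset.mem_filter.mp hC
            have := hex C hCF h3
            have := hIH3 C hC
            omega
          calc 3 * A + ℱb.card = ∑ C ∈ ℱb, (3 * nuOn G C + 1) := by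
                rw [Finset.sum_add_distrib, Finset.sum_const, smul_eq_mul, mul_one,
                  Finset.mul_sum]
              _ ≤ B := Finset.sum_le_sum this
    have P1 : ∃ D, IsoOn G S D ∧ 3 * D.ncard ≤ S.ncard := by
      by_cases hcut : ∃ v ∈ S, ¬ WConn G (S \ {v})
      · obtain ⟨v, hv, hvcut⟩ := hcut
        have hKne : ({v} ∩ S).Nonempty := ⟨v, rfl, hv⟩
        obtain ⟨U, t1, t2, A, B, hU, hUA, hAB, hcard, hbigU, ht2, hcount, hhard, hfind⟩ :=
          setup {v} hKne
        have hKS : ({v} ∩ S).ncard = 1 := by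
          rw [Set.inter_eq_self_of_subset_left (Set.singleton_subset_iff.mpr hv)]
          exact Set.ncard_singleton v
        rw [hKS] at hcard
        -- at least two components
        have h2comp : 2 ≤ (comps G (S \ {v})).card := by
          have hRcard : (S \ {v}).ncard + 1 = S.ncard :=
            Set.ncard_diff_singleton_add_one hv (Set.toFinite S)
          have hRne : (S \ {v}).Nonempty := by
            rw [← Set.ncard_pos (Set.toFinite _)]; omega
          have : ¬ WConn G (S \ {v}) := hvcut
          rw [WConn, not_and] at this
          have h2 := this hRne
          push_neg at h2
          obtain ⟨a, ha, b, hb, hnab⟩ := h2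
          refine Finset.one_lt_card.mpr ⟨CompOf G (S \ {v}) a, mem_comps.mpr ⟨a, ha, rfl⟩,
            CompOf G (S \ {v}) b, mem_comps.mpr ⟨b, hb, rfl⟩, ?_⟩
          intro heq
          exact hnab (heq ▸ (mem_compOf_self hb)).2
        by_cases hval : 3 * A + 2 ≤ t1 + 2 * t2 + B
        · -- main case : take v together with the big-component isolators
          refine ⟨insert v U, ?_, ?_⟩
          · apply build (K := {v})
            · exact Set.insert_subset hv (hU.trans Set.diff_subset)
            · rintro x ⟨rfl, hxS⟩
              exact subset_closedNbhd (Set.mem_insert _ _)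
            · intro C hC h3
              obtain ⟨D, hD, hiso⟩ := hbigU C hC h3
              exact ⟨D, hD.trans (Set.subset_insert _ _), hiso⟩
            · intro C hC h2
              obtain ⟨c, hc, rfl⟩ := mem_comps.mp hC
              obtain ⟨z, hz, q, hq, hadj⟩ := exists_attach hSconn hc hKne
              have hqv : q = v := hq.1
              subst hqv
              exact two_comp_subsingleton h2 hz
                (mem_closedNbhd_of_adj (Set.mem_insert _ _) hadj)
          · have := Set.ncard_insert_le v U
            omega
        · -- hard case : there is a tight big component
          obtain ⟨C₀, hC₀, h3C₀, htC₀⟩ : ∃ C ∈ comps G (S \ {v}),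
              3 ≤ C.ncard ∧ C.ncard ≤ 3 * nuOn G C := by
            rcases hfind with h | h
            · exact h
            · exfalso; omega
          have hC₀lt : C₀.ncard < S.ncard := by
            refine Set.ncard_lt_ncard ⟨(comps_subset hC₀).trans Set.diff_subset, ?_⟩
              (Set.toFinite S)
            intro hsub
            exact ((comps_subset hC₀) (hsub hv)).2 rfl
          obtain ⟨c, hc, hC₀eq⟩ := mem_comps.mp hC₀
          obtain ⟨z, hz, q, hq, hadj⟩ := exists_attach hSconn hc hKne
          rw [hq.1] at hadj
          rw [← hC₀eq] at hz
          have htight : ∀ D, IsoOn G C₀ D → C₀.ncard ≤ 3 * D.ncard := by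
            intro D hD
            have := nuOn_le hD
            omega
          obtain ⟨_, hP2⟩ := IH C₀ (by omega) (comps_wconn hC₀) h3C₀
          obtain ⟨E₀, hisoE₀, hzE₀, hE₀card⟩ := hP2 z hz htight
          obtain ⟨U', hU'sub, hE₀U', hbound, hbig'⟩ := hhard C₀ hC₀ h3C₀ E₀ hisoE₀
          have ht20 : t2 = 0 := by omega
          refine ⟨U', ?_, by omega⟩
          apply build (K := {v})
          · exact hU'sub.trans Set.diff_subset
          · rintro x ⟨rfl, hxS⟩
            exact mem_closedNbhd_of_adj (hE₀U' hzE₀) hadj.symm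
          · exact hbig'
          · intro C hC h2
            exfalso
            have hmem : C ∈ (comps G (S \ {v})).filter (fun C => C.ncard = 2) :=
              Finset.mem_filter.mpr ⟨hC, h2⟩
            have hfilt : ((comps G (S \ {v})).filter (fun C => C.ncard = 2)) = ∅ :=
              Finset.card_eq_zero.mp (by omega)
            rw [hfilt] at hmem
            exact Finset.notMem_empty C hmem
      · -- no cut vertex : S is a clique
        push_neg at hcut
        have hgood : GoodSet G S := ⟨hSconn, hcut⟩
        have hpair := goodSet_pairwise hbg hgood
        obtain ⟨v₀, hv₀⟩ := hSconn.1
        refine ⟨{v₀}, ⟨Set.singleton_subset_iff.mpr hv₀, ?_⟩, by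
          rw [Set.ncard_singleton]; omega⟩
        intro a ha hna
        exfalso
        apply hna
        rcases eq_or_ne a v₀ with rfl | hne
        · exact subset_closedNbhd rfl
        · exact mem_closedNbhd_of_adj rfl (hpair hv₀ ha hne.symm)

    refine ⟨P1, ?_⟩
    intro v hv hTight
    obtain ⟨Dm, hDm, hDm3⟩ := P1
    have hmod : S.ncard = 3 * Dm.ncard := le_antisymm (hTight Dm hDm) hDm3
    by_cases hvcut : WConn G (S \ {v})
    · -- v is not a cut vertex : work with its closed neighbourhood Q
      set Q : Set V := insert v {u | u ∈ S ∧ G.Adj v u} with hQdef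
      have hQS : Q ⊆ S := by
        intro q hq
        rcases Set.mem_insert_iff.mp hq with rfl | hq
        · exact hv
        · exact hq.1
      have hQpair : Q.Pairwise G.Adj := by
        intro a ha b hb hab
        rcases Set.mem_insert_iff.mp ha with rfl | ha
        · rcases Set.mem_insert_iff.mp hb with rfl | hb
          · exact absurd rfl hab
          · exact hb.2
        · rcases Set.mem_insert_iff.mp hb with rfl | hb
          · exact ha.2.symm
          · exact noncut_nbr_adj hbg hvcut ha.1 hb.1 ha.2 hb.2 hab
      obtain ⟨u₀, hu₀S, hu₀⟩ : ∃ u ∈ S, G.Adj v u := by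
        obtain ⟨b, hb, hbv⟩ := Set.exists_ne_of_one_lt_ncard (s := S) (by omega) v
        obtain ⟨w, hw⟩ := hSconn.2 v hv b hb
        cases w with
        | nil => exact absurd rfl hbv.symm
        | cons h p => exact ⟨_, hw _ (by simp), h⟩
      have hu₀Q : u₀ ∈ Q := Set.mem_insert_of_mem _ ⟨hu₀S, hu₀⟩
      have hvQ : v ∈ Q := Set.mem_insert _ _
      have hQ2 : 2 ≤ Q.ncard := by
        have hsub : {v, u₀} ⊆ Q := by
          intro x hx
          rcases hx with rfl | rfl
          · exact hvQ
          · exact hu₀Q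
        have := Set.ncard_le_ncard hsub (Set.toFinite Q)
        rwa [Set.ncard_pair hu₀.ne] at this
      have hQne : (Q ∩ S).Nonempty := ⟨v, hvQ, hv⟩
      obtain ⟨U, t1, t2, A, B, hU, hUA, hAB, hcard, hbigU, ht2, hcount, hhard, hfind⟩ :=
        setup Q hQne
      rw [Set.inter_eq_self_of_subset_left hQS] at hcard
      -- attachments of components avoid v
      have hattach2 : ∀ C ∈ comps G (S \ Q),
          ∃ q, (q ∈ Q ∧ q ≠ v) ∧ ∃ z ∈ C, G.Adj q z := by
        intro C hC
        obtain ⟨c, hc, rfl⟩ := mem_comps.mp hC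
        obtain ⟨z, hz, q, hqQS, hadj⟩ := exists_attach hSconn hc hQne
        refine ⟨q, ⟨hqQS.1, ?_⟩, z, hz, hadj⟩
        rintro rfl
        exact (compOf_subset hz).2 (Set.mem_insert_of_mem _ ⟨(compOf_subset hz).1, hadj⟩)
      by_cases hQ3 : 3 ≤ Q.ncard
      · -- large clique around v
        by_cases ht20 : t2 = 0
        · -- no components of size two : insert v U works
          refine ⟨insert v U, ?_, Set.mem_insert _ _, ?_⟩
          · apply build (K := Q)
            · exact Set.insert_subset hv (hU.trans Set.diff_subset)
            · rintro x ⟨hxQ, hxS⟩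
              rcases Set.mem_insert_iff.mp hxQ with rfl | hx
              · exact subset_closedNbhd (Set.mem_insert _ _)
              · exact mem_closedNbhd_of_adj (Set.mem_insert _ _) hx.2
            · intro C hC h3
              obtain ⟨D, hD, hiso⟩ := hbigU C hC h3
              exact ⟨D, hD.trans (Set.subset_insert _ _), hiso⟩
            · intro C hC h2
              exfalso
              have hmem : C ∈ (comps G (S \ Q)).filter (fun C => C.ncard = 2) :=
                Finset.mem_filter.mpr ⟨hC, h2⟩
              have hfilt : ((comps G (S \ Q)).filter (fun C => C.ncard = 2)) = ∅ :=
                Finset.card_eq_zero.mp (by omega)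
              rw [hfilt] at hmem
              exact Finset.notMem_empty C hmem
          · have := Set.ncard_insert_le v U
            omega
        · -- some component of size two : contradiction with tightness
          exfalso
          set ℱ2 := (comps G (S \ Q)).filter (fun C => C.ncard = 2) with hF2def
          have hattach3 : ∀ C ∈ ℱ2, ∃ q, (q ∈ Q ∧ q ≠ v) ∧ ∃ z ∈ C, G.Adj q z :=
            fun C hC => hattach2 C (Finset.mem_filter.mp hC).1
          set qf : Set V → V := fun C =>
            if h : ∃ q, (q ∈ Q ∧ q ≠ v) ∧ ∃ z ∈ C, G.Adj q z then Classical.choose h else v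
            with hqfdef
          have hqf : ∀ C ∈ ℱ2, (qf C ∈ Q ∧ qf C ≠ v) ∧ ∃ z ∈ C, G.Adj (qf C) z := by
            intro C hC
            have h := hattach3 C hC
            simp only [hqfdef, dif_pos h]
            exact Classical.choose_spec h
          set X : Finset V := ℱ2.image qf with hXdef
          have hXcard : X.card ≤ t2 := ht2 ▸ Finset.card_image_le
          have hXsub : (↑X : Set V) ⊆ Q \ {v} := by
            intro x hx
            rw [Finset.coe_image] at hx
            obtain ⟨C, hC, rfl⟩ := hx
            have := hqf C hC
            exact ⟨this.1.1, this.1.2⟩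
          have hXQ : (↑X : Set V).ncard + 1 ≤ Q.ncard := by
            have h1 := Set.ncard_le_ncard hXsub (Set.toFinite _)
            have h2 := Set.ncard_diff_singleton_add_one hvQ (Set.toFinite Q)
            omega
          have hX0 : 0 < X.card := by
            rw [hXdef]
            rw [Finset.card_pos, Finset.image_nonempty, ← Finset.card_pos]
            omega
          obtain ⟨u₁, hu₁⟩ := Finset.card_pos.mp hX0
          have hu₁Q : u₁ ∈ Q ∧ u₁ ≠ v := by
            have := hXsub (Finset.mem_coe.mpr hu₁)
            exact ⟨this.1, this.2⟩
          have hD₀ : IsoOn G S ((↑X : Set V) ∪ U) := by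
            apply build (K := Q)
            · exact Set.union_subset (fun x hx => hQS (hXsub hx).1)
                (hU.trans Set.diff_subset)
            · rintro x ⟨hxQ, hxS⟩
              rcases eq_or_ne x u₁ with rfl | hxu
              · exact subset_closedNbhd (Or.inl (Finset.mem_coe.mpr hu₁))
              · exact mem_closedNbhd_of_adj (Or.inl (Finset.mem_coe.mpr hu₁))
                  (hQpair hu₁Q.1 hxQ hxu.symm)
            · intro C hC h3
              obtain ⟨D, hD, hiso⟩ := hbigU C hC h3
              exact ⟨D, hD.trans Set.subset_union_right, hiso⟩
            · intro C hC h2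
              have hCF2 : C ∈ ℱ2 := Finset.mem_filter.mpr ⟨hC, h2⟩
              obtain ⟨_, z, hz, hadjz⟩ := hqf C hCF2
              refine two_comp_subsingleton h2 hz (mem_closedNbhd_of_adj ?_ hadjz)
              exact Or.inl (Finset.mem_coe.mpr (Finset.mem_image_of_mem qf hCF2))
          have htig := hTight _ hD₀
          have hXU : ((↑X : Set V) ∪ U).ncard ≤ X.card + A := by
            have h1 := Set.ncard_union_le (↑X : Set V) U
            have h2 : (↑X : Set V).ncard = X.card := Set.ncard_coe_finset X
            omega
          have h2 : (↑X : Set V).ncard = X.card := Set.ncard_coe_finset X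
          omega
      · -- v is a pendant vertex
        have hQ2' : Q.ncard = 2 := by omega
        obtain ⟨x, y, hxy, hQeq⟩ := Set.ncard_eq_two.mp hQ2'
        obtain ⟨u, hQeq', huv⟩ : ∃ u, Q = {v, u} ∧ u ≠ v := by
          rcases (hQeq ▸ hvQ : v ∈ ({x, y} : Set V)) with rfl | rfl
          · exact ⟨y, hQeq, fun h => hxy h.symm⟩
          · exact ⟨x, by rw [hQeq, Set.pair_comm], fun h => hxy h⟩
        have huQ : u ∈ Q := hQeq' ▸ Set.mem_insert_of_mem _ rfl
        have hvu : G.Adj v u := by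
          rcases Set.mem_insert_iff.mp (hQdef ▸ huQ) with h | h
          · exact absurd h huv
          · exact h.2
        by_cases hval4 : 3 * A + 4 ≤ t1 + 2 * t2 + B
        · -- both v and u go into the isolating set
          refine ⟨insert v (insert u U), ?_, Set.mem_insert _ _, ?_⟩
          · apply build (K := Q)
            · refine Set.insert_subset hv (Set.insert_subset (hQS huQ)
                (hU.trans Set.diff_subset))
            · rintro x' ⟨hxQ, hxS⟩
              rcases (hQeq' ▸ hxQ : x' ∈ ({v, u} : Set V)) with rfl | rfl
              · exact subset_closedNbhd (Set.mem_insert _ _)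
              · exact subset_closedNbhd (Set.mem_insert_of_mem _ (Set.mem_insert _ _))
            · intro C hC h3
              obtain ⟨D, hD, hiso⟩ := hbigU C hC h3
              exact ⟨D, hD.trans ((Set.subset_insert _ _).trans (Set.subset_insert _ _)),
                hiso⟩
            · intro C hC h2
              obtain ⟨q, ⟨hqQ, hqv⟩, z, hz, hadj⟩ := hattach2 C hC
              have hqu : q = u := by
                rcases (hQeq' ▸ hqQ : q ∈ ({v, u} : Set V)) with rfl | rfl
                · exact absurd rfl hqv
                · rfl
              subst hqu
              exact two_comp_subsingleton h2 hz (mem_closedNbhd_of_adj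
                (Set.mem_insert_of_mem _ (Set.mem_insert _ _)) hadj)
          · have h1 := Set.ncard_insert_le v (insert u U)
            have h2 := Set.ncard_insert_le u U
            omega
        · -- remaining tight pendant case : insert v U suffices
          have hkey : t2 = 0 ∧ 3 * A + 1 ≤ t1 + B := by
            constructor <;> omega
          refine ⟨insert v U, ?_, Set.mem_insert _ _, ?_⟩
          · apply build (K := Q)
            · exact Set.insert_subset hv (hU.trans Set.diff_subset)
            · rintro x' ⟨hxQ, hxS⟩
              rcases (hQeq' ▸ hxQ : x' ∈ ({v, u} : Set V)) with rfl | rfl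
              · exact subset_closedNbhd (Set.mem_insert _ _)
              · exact mem_closedNbhd_of_adj (Set.mem_insert _ _) hvu
            · intro C hC h3
              obtain ⟨D, hD, hiso⟩ := hbigU C hC h3
              exact ⟨D, hD.trans (Set.subset_insert _ _), hiso⟩
            · intro C hC h2
              exfalso
              have hmem : C ∈ (comps G (S \ Q)).filter (fun C => C.ncard = 2) :=
                Finset.mem_filter.mpr ⟨hC, h2⟩
              have hfilt : ((comps G (S \ Q)).filter (fun C => C.ncard = 2)) = ∅ :=
                Finset.card_eq_zero.mp (by omega)
              rw [hfilt] at hmem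
              exact Finset.notMem_empty C hmem
          · have := Set.ncard_insert_le v U
            omega
    · -- v is a cut vertex
      have hKne : ({v} ∩ S).Nonempty := ⟨v, rfl, hv⟩
      obtain ⟨U, t1, t2, A, B, hU, hUA, hAB, hcard, hbigU, ht2, hcount, hhard, hfind⟩ :=
        setup {v} hKne
      have hKS : ({v} ∩ S).ncard = 1 := by
        rw [Set.inter_eq_self_of_subset_left (Set.singleton_subset_iff.mpr hv)]
        exact Set.ncard_singleton v
      rw [hKS] at hcard
      have hval : 3 * A + 2 ≤ t1 + 2 * t2 + B := by omega
      refine ⟨insert v U, ?_, Set.mem_insert _ _, ?_⟩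
      · apply build (K := {v})
        · exact Set.insert_subset hv (hU.trans Set.diff_subset)
        · rintro x ⟨rfl, hxS⟩
          exact subset_closedNbhd (Set.mem_insert _ _)
        · intro C hC h3
          obtain ⟨D, hD, hiso⟩ := hbigU C hC h3
          exact ⟨D, hD.trans (Set.subset_insert _ _), hiso⟩
        · intro C hC h2
          obtain ⟨c, hc, rfl⟩ := mem_comps.mp hC
          obtain ⟨z, hz, q, hq, hadj⟩ := exists_attach hSconn hc hKne
          rw [hq.1] at hadj
          exact two_comp_subsingleton h2 hz
            (mem_closedNbhd_of_adj (Set.mem_insert _ _) hadj)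
      · have := Set.ncard_insert_le v U
        omega

end Main

/-! ### final assembly -/

lemma isoOn_univ_iff {D : Set V} : IsoOn G Set.univ D ↔ IsIsolating G D :=
  ⟨fun h a b ha hb => h.2 a trivial ha b trivial hb,
   fun h => ⟨Set.subset_univ D, fun a _ ha b _ hb => h a b ha hb⟩⟩

lemma wconn_univ (h : G.Connected) : WConn G (Set.univ : Set V) := by
  have : Nonempty V := h.nonempty
  refine ⟨⟨Classical.arbitrary V, trivial⟩, ?_⟩
  intro a _ b _
  obtain ⟨w⟩ := h.preconnected a b
  exact ⟨w, fun x _ => trivial⟩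

lemma clique_nocut [Fintype V] {B' : Set V} (hpair : B'.Pairwise G.Adj)
    (h2 : 2 ≤ B'.ncard) (w : ↥B') : ¬ IsCutVertex (G.induce B') w := by
  rintro ⟨hconn, hncon⟩
  apply hncon
  rw [← wconn_iff_induce_connected (G := G.induce B'), wconn_induce_iff, image_val_ne]
  apply wconn_of_clique
  · obtain ⟨b, hb, hbw⟩ := Set.exists_ne_of_one_lt_ncard (s := B') (by omega) w.val
    exact ⟨b, hb, hbw⟩
  · exact hpair.mono Set.diff_subset

lemma clique_conn {B' : Set V} (hpair : B'.Pairwise G.Adj) (hne : B'.Nonempty) :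
    (G.induce B').Connected :=
  wconn_iff_induce_connected.mp (wconn_of_clique hne hpair)

/-- simplicial vertices of a block have all their neighbours inside the block. -/
lemma simplicial_nbr_mem [Fintype V] {B : Set V} (hB : IsBlock G B)
    (hpair : B.Pairwise G.Adj) {s : V} (hs : s ∈ B) (hsimp : Simplicial G s)
    {t : V} (hadj : G.Adj s t) : t ∈ B := by
  by_contra htB
  have hadjall : ∀ b ∈ B, G.Adj t b := by
    intro b hb
    rcases eq_or_ne b s with hbs | hbs
    · rw [hbs]; exact hadj.symm
    · have htb : t ≠ b := fun h => htB (h ▸ hb)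
      exact hsimp t hadj b (hpair hs hb hbs.symm) htb
  have hpair' : (insert t B).Pairwise G.Adj := by
    intro a ha b hb hab
    rcases Set.mem_insert_iff.mp ha with ha' | ha'
    · rcases Set.mem_insert_iff.mp hb with hb' | hb'
      · exact absurd (ha'.trans hb'.symm) hab
      · rw [ha']; exact hadjall b hb'
    · rcases Set.mem_insert_iff.mp hb with hb' | hb'
      · rw [hb']; exact (hadjall a ha').symm
      · exact hpair ha' hb' hab
  have h2 : 2 ≤ (insert t B).ncard := by
    have hsub : {t, s} ⊆ insert t B := by
      intro x hx
      rcases hx with rfl | rfl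
      · exact Set.mem_insert _ _
      · exact Set.mem_insert_of_mem _ hs
    have hts : t ≠ s := fun h => htB (h ▸ hs)
    have := Set.ncard_le_ncard hsub (Set.toFinite _)
    rwa [Set.ncard_pair hts] at this
  have heq : insert t B = B := by
    refine hB.2.2 (insert t B) (Set.subset_insert _ _) ?_ ?_
    · exact clique_conn hpair' ⟨t, Set.mem_insert _ _⟩
    · exact fun w => clique_nocut hpair' h2 w
  exact htB (heq ▸ Set.mem_insert t B)

end Stmt5Aux

open Stmt5Aux in
theorem stmt5 {V : Type*} [Fintype V] (G : SimpleGraph V)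
    (hbg : IsBlockGraph G) (hne : G ≠ ⊤)
    (hiso : 3 * isolNum G = Fintype.card V) :
    ∀ B : Set V, IsBlock G B → {v ∈ B | Simplicial G v}.ncard ≤ 2 := by
  classical
  intro B hB
  by_contra hge
  push_neg at hge
  have hpair : B.Pairwise G.Adj := fun x hx y hy hxy => hbg.2 B hB x hx y hy hxy
  obtain ⟨T, hTsub, hT3⟩ := Set.exists_subset_card_eq (n := 3) hge
  obtain ⟨s₁, s₂, s₃, h12, h13, h23, hTeq⟩ := Set.ncard_eq_three.mp hT3
  have hTB : T ⊆ B := hTsub.trans (Set.sep_subset _ _)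
  have hs₁ : s₁ ∈ B ∧ Simplicial G s₁ := hTsub (hTeq ▸ (by simp : s₁ ∈ ({s₁, s₂, s₃} : Set V)))
  have hs₂ : s₂ ∈ B ∧ Simplicial G s₂ := hTsub (hTeq ▸ (by simp : s₂ ∈ ({s₁, s₂, s₃} : Set V)))
  have hs₃ : s₃ ∈ B ∧ Simplicial G s₃ := hTsub (hTeq ▸ (by simp : s₃ ∈ ({s₁, s₂, s₃} : Set V)))
  have hconnU : WConn G (Set.univ : Set V) := wconn_univ hbg.1
  have hTightU : ∀ D, IsoOn G Set.univ D → (Set.univ : Set V).ncard ≤ 3 * D.ncard := by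
    intro D hD
    have h1 : isolNum G ≤ D.ncard := Nat.sInf_le ⟨D, isoOn_univ_iff.mp hD, rfl⟩
    rw [Set.ncard_univ, Nat.card_eq_fintype_card, ← hiso]
    omega
  have hnbr : ∀ s, s ∈ B → Simplicial G s → ∀ t, G.Adj s t → t ∈ B :=
    fun s hs hsimp t hadj => simplicial_nbr_mem hB hpair hs hsimp hadj
  have hBneU : B ≠ Set.univ := by
    rintro rfl
    apply hne
    ext x y
    rw [SimpleGraph.top_adj]
    exact ⟨G.ne_of_adj, fun h => hpair trivial trivial h⟩
  obtain ⟨y₀, hy₀⟩ := (Set.ne_univ_iff_exists_notMem B).mp hBneU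
  set R : Set V := Set.univ \ B with hRdef
  have hy₀R : y₀ ∈ R := ⟨trivial, hy₀⟩
  have hBneI : (B ∩ Set.univ).Nonempty := ⟨s₁, hs₁.1, trivial⟩
  have hattach : ∀ C ∈ comps G R, ∃ q, (q ∈ B ∧ q ∉ T) ∧ ∃ z ∈ C, G.Adj q z := by
    intro C hC
    obtain ⟨c, hc, rfl⟩ := mem_comps.mp hC
    obtain ⟨z, hz, q, hq, hadj⟩ := exists_attach hconnU hc hBneI
    refine ⟨q, ⟨hq.1, ?_⟩, z, hz, hadj⟩
    intro hqT
    have hzB : z ∈ B := by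
      rcases (hTeq ▸ hqT : q ∈ ({s₁, s₂, s₃} : Set V)) with rfl | rfl | rfl
      · exact hnbr _ hs₁.1 hs₁.2 z hadj
      · exact hnbr _ hs₂.1 hs₂.2 z hadj
      · exact hnbr _ hs₃.1 hs₃.2 z hadj
    exact (compOf_subset hz).2 hzB
  have hT3' : T.ncard = 3 := hT3
  have hB4 : 4 ≤ B.ncard := by
    obtain ⟨q, ⟨hqB, hqT⟩, -⟩ := hattach (CompOf G R y₀) (mem_comps.mpr ⟨y₀, hy₀R, rfl⟩)
    have hsub : insert q T ⊆ B := Set.insert_subset hqB hTB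
    have hc : (insert q T).ncard = 4 := by
      rw [Set.ncard_insert_of_notMem hqT (Set.toFinite T), hT3']
    have := Set.ncard_le_ncard hsub (Set.toFinite B)
    omega
  -- component data
  set ℱ := comps G R with hFdef
  set ℱb := ℱ.filter (fun C => 3 ≤ C.ncard) with hFbdef
  set DC : Set V → Set V := fun C =>
    if h : ∃ D, IsoOn G C D ∧ 3 * D.ncard ≤ C.ncard then Classical.choose h else ∅
    with hDCdef
  have hDC : ∀ C ∈ ℱb, IsoOn G C (DC C) ∧ 3 * (DC C).ncard ≤ C.ncard := by
    intro C hC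
    obtain ⟨hCF, h3⟩ := Finset.mem_filter.mp hC
    have hex : ∃ D, IsoOn G C D ∧ 3 * D.ncard ≤ C.ncard :=
      (main_ind hbg C.ncard C le_rfl (comps_wconn hCF) h3).1
    simp only [hDCdef, dif_pos hex]
    exact Classical.choose_spec hex
  set U : Set V := ⋃ C ∈ ℱb, DC C with hUdef
  set A : ℕ := ∑ C ∈ ℱb, (DC C).ncard with hAdef
  set Bs : ℕ := ∑ C ∈ ℱb, C.ncard with hBsdef
  set t1 : ℕ := (ℱ.filter (fun C => C.ncard = 1)).card with ht1def
  set t2 : ℕ := (ℱ.filter (fun C => C.ncard = 2)).card with ht2def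
  have hUsub : U ⊆ R := by
    intro x hx
    simp only [hUdef, Set.mem_iUnion] at hx
    obtain ⟨C, hC, hxC⟩ := hx
    exact (comps_subset (Finset.mem_filter.mp hC).1) ((hDC C hC).1.1 hxC)
  have hUA : U.ncard ≤ A := ncard_biUnion_le ℱb DC
  have hABs : 3 * A ≤ Bs := by
    rw [hAdef, hBsdef, Finset.mul_sum]
    exact Finset.sum_le_sum fun C hC => (hDC C hC).2
  have hone : ∀ C ∈ ℱ, 1 ≤ C.ncard := fun C hC =>
    (Set.ncard_pos (Set.toFinite C)).mpr (comps_nonempty_mem hC)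
  have hcard : (Set.univ : Set V).ncard = B.ncard + (t1 + 2 * t2 + Bs) := by
    have h1 : ((Set.univ : Set V) ∩ B).ncard + ((Set.univ : Set V) \ B).ncard
        = (Set.univ : Set V).ncard :=
      Set.ncard_inter_add_ncard_diff_eq_ncard Set.univ B (Set.toFinite _)
    have h2 : (Set.univ : Set V) ∩ B = B := Set.univ_inter B
    have h3 : R.ncard = t1 + 2 * t2 + Bs := by
      rw [hBsdef, ht1def, ht2def, hFdef, ← sum_comps_ncard (G := G) (R := R)]
      exact sum_split ℱ hone
    rw [← h1, h2, h3]
  have hbigU : ∀ C ∈ ℱ, 3 ≤ C.ncard → ∃ D, D ⊆ U ∧ IsoOn G C D := by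
    intro C hC h3
    have hCb : C ∈ ℱb := Finset.mem_filter.mpr ⟨hC, h3⟩
    exact ⟨DC C, Set.subset_biUnion_of_mem (u := DC) hCb, (hDC C hCb).1⟩
  by_cases ht20 : t2 = 0
  · -- no components of size 2
    have hD : IsoOn G Set.univ (insert s₁ U) := by
      apply build (K := B)
      · exact Set.subset_univ _
      · rintro x ⟨hxB, -⟩
        rcases eq_or_ne x s₁ with rfl | hxs
        · exact subset_closedNbhd (Set.mem_insert _ _)
        · exact mem_closedNbhd_of_adj (Set.mem_insert _ _) (hpair hs₁.1 hxB hxs.symm)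
      · intro C hC h3
        obtain ⟨D, hD, hiso⟩ := hbigU C hC h3
        exact ⟨D, hD.trans (Set.subset_insert _ _), hiso⟩
      · intro C hC h2
        exfalso
        have hmem : C ∈ ℱ.filter (fun C => C.ncard = 2) := Finset.mem_filter.mpr ⟨hC, h2⟩
        have hfilt : ℱ.filter (fun C => C.ncard = 2) = ∅ := Finset.card_eq_zero.mp (by omega)
        rw [hfilt] at hmem
        exact Finset.notMem_empty C hmem
    have := hTightU _ hD
    have hins := Set.ncard_insert_le s₁ U
    omega
  · -- a component of size 2 : contradiction with tightness
    set ℱ2 := ℱ.filter (fun C => C.ncard = 2) with hF2def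
    have hattach3 : ∀ C ∈ ℱ2, ∃ q, (q ∈ B ∧ q ∉ T) ∧ ∃ z ∈ C, G.Adj q z :=
      fun C hC => hattach C (Finset.mem_filter.mp hC).1
    set qf : Set V → V := fun C =>
      if h : ∃ q, (q ∈ B ∧ q ∉ T) ∧ ∃ z ∈ C, G.Adj q z then Classical.choose h else s₁
      with hqfdef
    have hqf : ∀ C ∈ ℱ2, (qf C ∈ B ∧ qf C ∉ T) ∧ ∃ z ∈ C, G.Adj (qf C) z := by
      intro C hC
      have h := hattach3 C hC
      simp only [hqfdef, dif_pos h]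
      exact Classical.choose_spec h
    set X : Finset V := ℱ2.image qf with hXdef
    have hXcard : X.card ≤ t2 := Finset.card_image_le
    have hXsub : (↑X : Set V) ⊆ B \ T := by
      intro x hx
      rw [hXdef, Finset.coe_image] at hx
      obtain ⟨C, hC, rfl⟩ := hx
      exact ⟨(hqf C hC).1.1, (hqf C hC).1.2⟩
    have hXB : (↑X : Set V).ncard + 3 ≤ B.ncard := by
      have h1 := Set.ncard_le_ncard hXsub (Set.toFinite _)
      have h2 : (B \ T).ncard = B.ncard - T.ncard := Set.ncard_diff hTB (Set.toFinite T)
      have h3 := Set.ncard_le_ncard hTB (Set.toFinite B)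
      omega
    have hX0 : 0 < X.card := by
      rw [hXdef, Finset.card_pos, Finset.image_nonempty, ← Finset.card_pos]
      omega
    obtain ⟨u₁, hu₁⟩ := Finset.card_pos.mp hX0
    have hu₁B : u₁ ∈ B := (hXsub (Finset.mem_coe.mpr hu₁)).1
    have hD₀ : IsoOn G Set.univ ((↑X : Set V) ∪ U) := by
      apply build (K := B)
      · exact Set.subset_univ _
      · rintro x ⟨hxB, -⟩
        rcases eq_or_ne x u₁ with rfl | hxu
        · exact subset_closedNbhd (Or.inl (Finset.mem_coe.mpr hu₁))
        · exact mem_closedNbhd_of_adj (Or.inl (Finset.mem_coe.mpr hu₁))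
            (hpair hu₁B hxB hxu.symm)
      · intro C hC h3
        obtain ⟨D, hD, hiso⟩ := hbigU C hC h3
        exact ⟨D, hD.trans Set.subset_union_right, hiso⟩
      · intro C hC h2
        have hCF2 : C ∈ ℱ2 := Finset.mem_filter.mpr ⟨hC, h2⟩
        obtain ⟨-, z, hz, hadjz⟩ := hqf C hCF2
        refine two_comp_subsingleton h2 hz (mem_closedNbhd_of_adj ?_ hadjz)
        exact Or.inl (Finset.mem_coe.mpr (Finset.mem_image_of_mem qf hCF2))
    have htig := hTightU _ hD₀
    have hXU : ((↑X : Set V) ∪ U).ncard ≤ X.card + A := by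
      have h1 := Set.ncard_union_le (↑X : Set V) U
      have h2 : (↑X : Set V).ncard = X.card := Set.ncard_coe_finset X
      omega
    have h2 : (↑X : Set V).ncard = X.card := Set.ncard_coe_finset X
    omega
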